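/- For every positive integer n and all subsets I, J ⊆ [n] with |I| = |J|, there exists exactly one perfect matching between I and J that belongs to the family ℳ_n. -/

import Mathlib

/-- `M` is a perfect matching between `I` and `J`: every pair of `M` lies in `I × J`,
and every element of `I` and of `J` occurs in exactly one pair of `M`. -/
def IsPM (I J : Finset ℕ) (M : Finset (ℕ × ℕ)) : Prop :=
  (∀ p ∈ M, p.1 ∈ I ∧ p.2 ∈ J) ∧
  (∀ i ∈ I, ∃! j : ℕ, (i, j) ∈ M) ∧
  (∀ j ∈ J, ∃! i : ℕ, (i, j) ∈ M)

/-- The cyclic shift `σ_ℓ(a) = ((a - 1 + ℓ) mod n) + 1` on `[n] = {1, …, n}`. -/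
def cycShift (n ℓ a : ℕ) : ℕ := (a - 1 + ℓ) % n + 1

/-- `M` is non-crossing and weakly increasing (nc+wi). -/
def NCWI (M : Finset (ℕ × ℕ)) : Prop :=
  (∀ p ∈ M, ∀ q ∈ M, p.1 < q.1 → p.2 < q.2) ∧ (∀ p ∈ M, p.1 ≤ p.2)

/-- The family `ℳ_n`: all `ℓ`-shifts (`0 ≤ ℓ < n`) of nc+wi perfect matchings on
subsets of `[n] = {1, …, n}`. -/
def MemDyckFamily (n : ℕ) (M : Finset (ℕ × ℕ)) : Prop :=
  ∃ ℓ < n, ∃ M₀ : Finset (ℕ × ℕ),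
    (∀ p ∈ M₀, p.1 ∈ Finset.Icc 1 n ∧ p.2 ∈ Finset.Icc 1 n) ∧
    IsPM (M₀.image Prod.fst) (M₀.image Prod.snd) M₀ ∧
    NCWI M₀ ∧
    M = M₀.image (fun p => (cycShift n ℓ p.1, cycShift n ℓ p.2))

namespace Dyck


/-- inverse of `cycShift n c` on `[1,n]`, for `1 ≤ c ≤ n`. -/
def unshift (n c a : ℕ) : ℕ := if a ≤ c then a + (n - c) else a - c

/-- prefix count -/
def cnt (S : Finset ℕ) (x : ℕ) : ℕ := (S.filter (· ≤ x)).card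

lemma cycShift_mem {n : ℕ} (hn : 0 < n) (ℓ : ℕ) {a : ℕ} (_ : a ∈ Finset.Icc 1 n) :
    cycShift n ℓ a ∈ Finset.Icc 1 n := by
  simp only [Finset.mem_Icc, cycShift]
  have := Nat.mod_lt (a - 1 + ℓ) hn
  omega

lemma unshift_mem {n c : ℕ} (hc1 : 1 ≤ c) (hc2 : c ≤ n) {a : ℕ} (ha : a ∈ Finset.Icc 1 n) :
    unshift n c a ∈ Finset.Icc 1 n := by
  simp only [Finset.mem_Icc] at *
  unfold unshift
  split <;> omega

lemma cycShift_unshift {n c : ℕ} (hc2 : c ≤ n) {a : ℕ} (ha : a ∈ Finset.Icc 1 n) :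
    cycShift n c (unshift n c a) = a := by
  simp only [Finset.mem_Icc] at ha
  unfold cycShift unshift
  split
  · have h1 : a + (n - c) - 1 + c = a - 1 + n := by omega
    rw [h1, Nat.add_mod_right, Nat.mod_eq_of_lt (by omega)]
    omega
  · have h1 : a - c - 1 + c = a - 1 := by omega
    rw [h1, Nat.mod_eq_of_lt (by omega)]
    omega

lemma unshift_cycShift {n c : ℕ} (hn : 0 < n) (hc2 : c ≤ n) {a : ℕ} (ha : a ∈ Finset.Icc 1 n) :
    unshift n c (cycShift n c a) = a := by
  simp only [Finset.mem_Icc] at ha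
  unfold cycShift unshift
  rcases Nat.lt_or_ge (a - 1 + c) n with h | h
  · rw [Nat.mod_eq_of_lt h]
    split <;> omega
  · have h2 : a - 1 + c - n < n := by omega
    have h3 : (a - 1 + c) % n = a - 1 + c - n := by
      rw [Nat.mod_eq_sub_mod (by omega), Nat.mod_eq_of_lt h2]
    rw [h3]
    split <;> omega

lemma cycShift_comp {n x y a : ℕ} (ha : 1 ≤ a) :
    cycShift n x (cycShift n y a) = cycShift n (y + x) a := by
  unfold cycShift
  have : (a - 1 + y) % n + 1 - 1 + x = (a - 1 + y) % n + x := by omega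
  rw [this, Nat.mod_add_mod]
  congr 2
  omega

lemma cycShift_mod {n x a : ℕ} : cycShift n (x % n) a = cycShift n x a := by
  unfold cycShift
  rw [Nat.add_mod_mod]

lemma unshift_eq_cycShift {n c : ℕ} (hc2 : c ≤ n) {a : ℕ} (ha : a ∈ Finset.Icc 1 n) :
    unshift n c a = cycShift n (n - c) a := by
  simp only [Finset.mem_Icc] at ha
  unfold cycShift unshift
  split
  · rw [Nat.mod_eq_of_lt (by omega)]; omega
  · rw [Nat.mod_eq_sub_mod (by omega), Nat.mod_eq_of_lt (by omega)]; omega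

lemma cnt_lt {S : Finset ℕ} {i j : ℕ} (hi : i ∈ S) (hji : j < i) : cnt S j < cnt S i := by
  apply Finset.card_lt_card
  constructor
  · intro a ha
    simp only [Finset.mem_filter] at *
    exact ⟨ha.1, by omega⟩
  · intro h
    have := h (Finset.mem_filter.mpr ⟨hi, le_refl i⟩)
    simp only [Finset.mem_filter] at this
    omega

lemma cnt_mono (S : Finset ℕ) {i j : ℕ} (hji : j ≤ i) : cnt S j ≤ cnt S i := by
  apply Finset.card_le_card
  intro a ha
  simp only [Finset.mem_filter] at *
  exact ⟨ha.1, le_trans ha.2 hji⟩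

lemma cnt_injOn {S : Finset ℕ} {i j : ℕ} (hi : i ∈ S) (hj : j ∈ S)
    (h : cnt S i = cnt S j) : i = j := by
  rcases Nat.lt_trichotomy i j with h' | h' | h'
  · have := cnt_lt hj h'; omega
  · exact h'
  · have := cnt_lt hi h'; omega

lemma cnt_eq_card {n : ℕ} {S : Finset ℕ} (hS : S ⊆ Finset.Icc 1 n) {x : ℕ} (hx : n ≤ x) :
    cnt S x = S.card := by
  unfold cnt
  congr 1
  apply Finset.filter_true_of_mem
  intro a ha
  have := hS ha
  simp only [Finset.mem_Icc] at this
  omega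




/-- For a strictly sorted list, the number of entries `≤ l[m]` is `m+1`. -/
lemma sorted_filter_le_length {l : List ℕ} (hl : l.Pairwise (· < ·)) :
    ∀ m (hm : m < l.length), (l.filter (· ≤ l[m])).length = m + 1 := by
  induction l with
  | nil => intro m hm; simp at hm
  | cons x xs ih =>
    intro m hm
    have hx : ∀ b ∈ xs, x < b := fun b hb => (List.pairwise_cons.mp hl).1 b hb
    cases m with
    | zero =>
      simp only [List.getElem_cons_zero, List.filter_cons, decide_eq_true_eq, le_refl,
        if_pos, List.length_cons]
      have : xs.filter (fun b => decide (b ≤ x)) = [] := by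
        apply List.filter_eq_nil_iff.mpr
        intro b hb
        simp only [decide_eq_true_eq]
        exact Nat.not_le.mpr (hx b hb)
      simp [this]
    | succ m =>
      have hm' : m < xs.length := by simpa using hm
      have hget : (x :: xs)[m+1] = xs[m] := by simp
      rw [hget]
      have hxle : x ≤ xs[m] := le_of_lt (hx _ (xs.getElem_mem hm'))
      simp only [List.filter_cons, decide_eq_true_eq, if_pos hxle, List.length_cons]
      rw [ih (List.pairwise_cons.mp hl).2 m hm']

lemma cnt_eq_list {S : Finset ℕ} {x : ℕ} :
    cnt S x = ((S.sort (· ≤ ·)).filter (· ≤ x)).length := by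
  unfold cnt
  rw [Finset.card_def, Finset.filter_val, ← Finset.sort_eq (s := S) (r := (· ≤ ·)), Multiset.filter_coe,
    Multiset.coe_card]

lemma rank_sort {S : Finset ℕ} {m : ℕ} (hm : m < (S.sort (· ≤ ·)).length) :
    cnt S ((S.sort (· ≤ ·))[m]) = m + 1 := by
  rw [cnt_eq_list]
  exact sorted_filter_le_length (S.sortedLT_sort.pairwise) m hm

lemma mem_sort_getElem {S : Finset ℕ} {a : ℕ} (ha : a ∈ S) :
    ∃ m, ∃ (hm : m < (S.sort (· ≤ ·)).length), (S.sort (· ≤ ·))[m] = a := by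
  have : a ∈ S.sort (· ≤ ·) := (Finset.mem_sort _).mpr ha
  exact List.mem_iff_getElem.mp this

lemma sort_getElem_mem {S : Finset ℕ} {m : ℕ} (hm : m < (S.sort (· ≤ ·)).length) :
    (S.sort (· ≤ ·))[m] ∈ S := by
  exact (Finset.mem_sort _).mp (List.getElem_mem hm)






/-- the canonical (order-preserving) matching between two finsets -/
def canM (I J : Finset ℕ) : Finset (ℕ × ℕ) :=
  ((I.sort (· ≤ ·)).zip (J.sort (· ≤ ·))).toFinset

lemma mem_canM {I J : Finset ℕ} (hc : I.card = J.card) {i j : ℕ} :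
    (i, j) ∈ canM I J ↔ i ∈ I ∧ j ∈ J ∧ cnt I i = cnt J j := by
  have hlen : (I.sort (· ≤ ·)).length = (J.sort (· ≤ ·)).length := by
    rw [Finset.length_sort, Finset.length_sort, hc]
  constructor
  · intro h
    rw [canM, List.mem_toFinset] at h
    obtain ⟨m, hm, hval⟩ := List.mem_iff_getElem.mp h
    rw [List.getElem_zip] at hval
    have hmI : m < (I.sort (· ≤ ·)).length := by
      rw [List.length_zip] at hm; omega
    have hmJ : m < (J.sort (· ≤ ·)).length := by omega
    have hi : (I.sort (· ≤ ·))[m] = i := congrArg Prod.fst hval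
    have hj : (J.sort (· ≤ ·))[m] = j := congrArg Prod.snd hval
    refine ⟨hi ▸ sort_getElem_mem hmI, hj ▸ sort_getElem_mem hmJ, ?_⟩
    rw [← hi, ← hj, rank_sort hmI, rank_sort hmJ]
  · rintro ⟨hi, hj, hr⟩
    obtain ⟨m, hm, hmi⟩ := mem_sort_getElem hi
    obtain ⟨m', hm', hmj⟩ := mem_sort_getElem hj
    have r1 : cnt I i = m + 1 := by rw [← hmi]; exact rank_sort hm
    have r2 : cnt J j = m' + 1 := by rw [← hmj]; exact rank_sort hm'
    have hmm : m = m' := by omega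
    subst hmm
    rw [canM, List.mem_toFinset]
    apply List.mem_iff_getElem.mpr
    refine ⟨m, by rw [List.length_zip]; omega, ?_⟩
    rw [List.getElem_zip]
    rw [hmi, hmj]

lemma canM_isPM {I J : Finset ℕ} (hc : I.card = J.card) : IsPM I J (canM I J) := by
  refine ⟨?_, ?_, ?_⟩
  · rintro ⟨i, j⟩ h
    have := (mem_canM hc).mp h
    exact ⟨this.1, this.2.1⟩
  · intro i hi
    obtain ⟨m, hm, hmi⟩ := mem_sort_getElem hi
    have hm' : m < (J.sort (· ≤ ·)).length := by
      rw [Finset.length_sort] at *; omega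
    refine ⟨(J.sort (· ≤ ·))[m], ?_, ?_⟩
    · show ((i, (J.sort (· ≤ ·))[m]) ∈ canM I J)
      rw [mem_canM hc]
      refine ⟨hi, sort_getElem_mem hm', ?_⟩
      rw [← hmi, rank_sort hm, rank_sort hm']
    · intro j' hj'
      rw [mem_canM hc] at hj'
      apply cnt_injOn hj'.2.1 (sort_getElem_mem hm')
      rw [← hj'.2.2, ← hmi, rank_sort hm, rank_sort hm']
  · intro j hj
    obtain ⟨m, hm, hmj⟩ := mem_sort_getElem hj
    have hm' : m < (I.sort (· ≤ ·)).length := by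
      rw [Finset.length_sort] at *; omega
    refine ⟨(I.sort (· ≤ ·))[m], ?_, ?_⟩
    · show (((I.sort (· ≤ ·))[m], j) ∈ canM I J)
      rw [mem_canM hc]
      refine ⟨sort_getElem_mem hm', hj, ?_⟩
      rw [← hmj, rank_sort hm, rank_sort hm']
    · intro i' hi'
      rw [mem_canM hc] at hi'
      apply cnt_injOn hi'.1 (sort_getElem_mem hm')
      rw [hi'.2.2, ← hmj, rank_sort hm, rank_sort hm']

lemma pm_fst_injOn {I J : Finset ℕ} {M : Finset (ℕ × ℕ)} (hpm : IsPM I J M) :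
    Set.InjOn Prod.fst (M : Set (ℕ × ℕ)) := by
  intro p hp q hq hpq
  simp only [Finset.coe_mem, Finset.mem_coe] at hp hq
  have hi : p.1 ∈ I := (hpm.1 p hp).1
  obtain ⟨j, _, huniq⟩ := hpm.2.1 p.1 hi
  have e1 : p.2 = j := huniq p.2 (by rwa [← Prod.mk.eta (p := p)] at hp)
  have e2 : q.2 = j := huniq q.2 (by show (p.1, q.2) ∈ M; rw [hpq]; rwa [← Prod.mk.eta (p := q)] at hq)
  exact Prod.ext hpq (e1.trans e2.symm)

lemma pm_snd_injOn {I J : Finset ℕ} {M : Finset (ℕ × ℕ)} (hpm : IsPM I J M) :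
    Set.InjOn Prod.snd (M : Set (ℕ × ℕ)) := by
  intro p hp q hq hpq
  simp only [Finset.mem_coe] at hp hq
  have hj : p.2 ∈ J := (hpm.1 p hp).2
  obtain ⟨i, _, huniq⟩ := hpm.2.2 p.2 hj
  have e1 : p.1 = i := huniq p.1 (by rwa [← Prod.mk.eta (p := p)] at hp)
  have e2 : q.1 = i := huniq q.1 (by show (q.1, p.2) ∈ M; rw [hpq]; rwa [← Prod.mk.eta (p := q)] at hq)
  exact Prod.ext (e1.trans e2.symm) hpq

lemma pm_image_fst {I J : Finset ℕ} {M : Finset (ℕ × ℕ)} (hpm : IsPM I J M) :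
    M.image Prod.fst = I := by
  apply Finset.Subset.antisymm
  · intro i hi
    obtain ⟨p, hp, rfl⟩ := Finset.mem_image.mp hi
    exact (hpm.1 p hp).1
  · intro i hi
    obtain ⟨j, hj, _⟩ := hpm.2.1 i hi
    exact Finset.mem_image.mpr ⟨(i, j), hj, rfl⟩

lemma pm_image_snd {I J : Finset ℕ} {M : Finset (ℕ × ℕ)} (hpm : IsPM I J M) :
    M.image Prod.snd = J := by
  apply Finset.Subset.antisymm
  · intro j hj
    obtain ⟨p, hp, rfl⟩ := Finset.mem_image.mp hj
    exact (hpm.1 p hp).2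
  · intro j hj
    obtain ⟨i, hi, _⟩ := hpm.2.2 j hj
    exact Finset.mem_image.mpr ⟨(i, j), hi, rfl⟩

lemma pm_card_fst {I J : Finset ℕ} {M : Finset (ℕ × ℕ)} (hpm : IsPM I J M) :
    M.card = I.card := by
  rw [← pm_image_fst hpm, Finset.card_image_of_injOn (pm_fst_injOn hpm)]

lemma pm_card_snd {I J : Finset ℕ} {M : Finset (ℕ × ℕ)} (hpm : IsPM I J M) :
    M.card = J.card := by
  rw [← pm_image_snd hpm, Finset.card_image_of_injOn (pm_snd_injOn hpm)]

lemma pm_cnt_fst {I J : Finset ℕ} {M : Finset (ℕ × ℕ)} (hpm : IsPM I J M) (x : ℕ) :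
    cnt I x = (M.filter (fun p => p.1 ≤ x)).card := by
  have h1 : I.filter (· ≤ x) = (M.filter (fun p => p.1 ≤ x)).image Prod.fst := by
    rw [← pm_image_fst hpm, Finset.filter_image]
  rw [cnt, h1, Finset.card_image_of_injOn]
  exact Set.InjOn.mono (fun p hp => by
    simp only [Finset.coe_filter, Set.mem_setOf_eq] at hp
    exact hp.1) (pm_fst_injOn hpm)

lemma pm_cnt_snd {I J : Finset ℕ} {M : Finset (ℕ × ℕ)} (hpm : IsPM I J M) (x : ℕ) :
    cnt J x = (M.filter (fun p => p.2 ≤ x)).card := by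
  have h1 : J.filter (· ≤ x) = (M.filter (fun p => p.2 ≤ x)).image Prod.snd := by
    rw [← pm_image_snd hpm, Finset.filter_image]
  rw [cnt, h1, Finset.card_image_of_injOn]
  exact Set.InjOn.mono (fun p hp => by
    simp only [Finset.coe_filter, Set.mem_setOf_eq] at hp
    exact hp.1) (pm_snd_injOn hpm)

/-- weakly increasing perfect matching forces prefix-count domination -/
lemma wi_cnt {I J : Finset ℕ} {M : Finset (ℕ × ℕ)} (hpm : IsPM I J M)
    (hwi : ∀ p ∈ M, p.1 ≤ p.2) (x : ℕ) : cnt J x ≤ cnt I x := by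
  rw [pm_cnt_fst hpm, pm_cnt_snd hpm]
  apply Finset.card_le_card
  intro p hp
  simp only [Finset.mem_filter] at *
  exact ⟨hp.1, le_trans (hwi p hp.1) hp.2⟩

/-- uniqueness of the monotone matching -/
lemma ncwi_eq_canM {M : Finset (ℕ × ℕ)}
    (hpm : IsPM (M.image Prod.fst) (M.image Prod.snd) M)
    (hmono : ∀ p ∈ M, ∀ q ∈ M, p.1 < q.1 → p.2 < q.2) :
    M = canM (M.image Prod.fst) (M.image Prod.snd) := by
  set I := M.image Prod.fst with hI
  set J := M.image Prod.snd with hJ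
  have hc : I.card = J.card := by
    rw [← pm_card_fst hpm, ← pm_card_snd hpm]
  apply Finset.eq_of_subset_of_card_le
  · rintro ⟨i, j⟩ hij
    rw [mem_canM hc]
    refine ⟨(hpm.1 _ hij).1, (hpm.1 _ hij).2, ?_⟩
    rw [pm_cnt_fst hpm, pm_cnt_snd hpm]
    congr 1
    apply Finset.filter_congr
    intro p hp
    constructor
    · intro h1
      rcases Nat.lt_or_ge p.1 i with h | h
      · exact le_of_lt (hmono p hp (i, j) hij h)
      · have : p.1 = i := by omega
        have : p = (i, j) := pm_fst_injOn hpm (Finset.mem_coe.mpr hp)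
          (Finset.mem_coe.mpr hij) this
        rw [this]
    · intro h2
      rcases Nat.lt_or_ge p.2 j with h | h
      · by_contra hcon
        have : j < p.2 := hmono (i, j) hij p hp (by simpa using Nat.lt_of_not_le hcon)
        omega
      · have : p.2 = j := by omega
        have : p = (i, j) := pm_snd_injOn hpm (Finset.mem_coe.mpr hp)
          (Finset.mem_coe.mpr hij) this
        rw [this]
  · rw [pm_card_fst (canM_isPM hc)]
    exact le_of_eq (pm_card_fst hpm).symm

/-- strict monotonicity of the canonical matching -/
lemma canM_mono {I J : Finset ℕ} (hc : I.card = J.card) :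
    ∀ p ∈ canM I J, ∀ q ∈ canM I J, p.1 < q.1 → p.2 < q.2 := by
  rintro ⟨i, j⟩ hp ⟨i', j'⟩ hq h
  rw [mem_canM hc] at hp hq
  have h1 : cnt I i < cnt I i' := cnt_lt hq.1 h
  rcases Nat.lt_or_ge j j' with h' | h'
  · exact h'
  · exfalso
    have : cnt J j' ≤ cnt J j := by
      rcases Nat.eq_or_lt_of_le h' with h'' | h''
      · rw [h'']
      · exact le_of_lt (cnt_lt hp.2.1 h'')
    omega




-- new material

lemma cycShift_add_mul {n x k a : ℕ} : cycShift n (x + n * k) a = cycShift n x a := by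
  unfold cycShift
  rw [← Nat.add_assoc, Nat.add_mul_mod_self_left]

lemma unshift_injOn {n c : ℕ} (hc2 : c ≤ n) :
    Set.InjOn (unshift n c) ((Finset.Icc 1 n : Finset ℕ) : Set ℕ) := by
  intro a ha b hb hab
  have := cycShift_unshift hc2 (a := a) (by exact_mod_cast ha)
  have h2 := cycShift_unshift hc2 (a := b) (by exact_mod_cast hb)
  rw [← this, ← h2, hab]

lemma cycShift_injOn {n c : ℕ} (hn : 0 < n) (hc2 : c ≤ n) :
    Set.InjOn (cycShift n c) ((Finset.Icc 1 n : Finset ℕ) : Set ℕ) := by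
  intro a ha b hb hab
  have := unshift_cycShift hn hc2 (a := a) (by exact_mod_cast ha)
  have h2 := unshift_cycShift hn hc2 (a := b) (by exact_mod_cast hb)
  rw [← this, ← h2, hab]

lemma filter_image_card {n : ℕ} {g : ℕ → ℕ} (hg : Set.InjOn g ((Finset.Icc 1 n : Finset ℕ) : Set ℕ))
    {S : Finset ℕ} (hS : S ⊆ Finset.Icc 1 n) (p : ℕ → Prop) [DecidablePred p] :
    ((S.image g).filter p).card = (S.filter (fun a => p (g a))).card := by
  rw [Finset.filter_image, Finset.card_image_of_injOn]
  intro a ha b hb hab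
  simp only [Finset.coe_filter, Set.mem_setOf_eq] at ha hb
  exact hg (Finset.mem_coe.mpr (hS ha.1)) (Finset.mem_coe.mpr (hS hb.1)) hab

lemma cnt_compl (S : Finset ℕ) (x : ℕ) :
    cnt S x + (S.filter (fun a => x + 1 ≤ a)).card = S.card := by
  have h := Finset.card_filter_add_card_filter_not (s := S) (p := (· ≤ x))
  have h2 : S.filter (fun a => ¬ a ≤ x) = S.filter (fun a => x + 1 ≤ a) := by
    apply Finset.filter_congr
    intro a _
    constructor <;> (intro; omega)
  rw [h2] at h
  exact h

lemma cnt_zero {n : ℕ} {S : Finset ℕ} (hS : S ⊆ Finset.Icc 1 n) : cnt S 0 = 0 := by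
  unfold cnt
  rw [Finset.card_eq_zero]
  apply Finset.filter_eq_empty_iff.mpr
  intro a ha
  have := hS ha
  simp only [Finset.mem_Icc] at this
  omega

/-- key counting identity for the number of elements mapped into a suffix by `unshift` -/
lemma count_unshift {n c t : ℕ} {S : Finset ℕ} (hS : S ⊆ Finset.Icc 1 n)
    (hc1 : 1 ≤ c) (hc2 : c ≤ n) (ht1 : 1 ≤ t) (ht2 : t ≤ n) :
    (S.filter (fun a => t ≤ unshift n c a)).card
      + (if t ≤ n - c then cnt S (c + t - 1) else cnt S (c + t - 1 - n) + S.card)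
      = cnt S c + S.card := by
  by_cases h : t ≤ n - c
  · rw [if_pos h]
    have h1 : S.filter (fun a => t ≤ unshift n c a)
        = S.filter (fun a => a ≤ c ∨ c + t ≤ a) := by
      apply Finset.filter_congr
      intro a ha
      have haI := hS ha
      simp only [Finset.mem_Icc] at haI
      unfold unshift
      constructor
      · intro h'
        by_cases hac : a ≤ c
        · exact Or.inl hac
        · rw [if_neg hac] at h'; right; omega
      · intro h'
        rcases h' with h' | h'
        · rw [if_pos h']; omega
        · rw [if_neg (by omega)]; omega
    rw [h1, Finset.filter_or, Finset.card_union_of_disjoint]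
    · have h2 : S.filter (fun a => c + t ≤ a) = S.filter (fun a => (c + t - 1) + 1 ≤ a) := by
        apply Finset.filter_congr; intro a _; constructor <;> (intro; omega)
      have h3 := cnt_compl S (c + t - 1)
      rw [h2] at *
      show cnt S c + _ + _ = _
      omega
    · rw [Finset.disjoint_left]
      intro a ha ha'
      simp only [Finset.mem_filter] at ha ha'
      omega
  · rw [if_neg h]
    have h1 : S.filter (fun a => t ≤ unshift n c a)
        = S.filter (fun a => (c + t - n - 1) + 1 ≤ a ∧ a ≤ c) := by
      apply Finset.filter_congr
      intro a ha
      have haI := hS ha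
      simp only [Finset.mem_Icc] at haI
      unfold unshift
      constructor
      · intro h'
        by_cases hac : a ≤ c
        · rw [if_pos hac] at h'; exact ⟨by omega, hac⟩
        · rw [if_neg hac] at h'; omega
      · intro h'
        rw [if_pos h'.2]; omega
    have h2 : (S.filter (· ≤ c)).filter (fun a => ¬ a ≤ c + t - n - 1)
        = S.filter (fun a => (c + t - n - 1) + 1 ≤ a ∧ a ≤ c) := by
      rw [Finset.filter_filter]
      apply Finset.filter_congr
      intro a _
      constructor <;> (intro hh; constructor <;> omega)
    have h3 : (S.filter (· ≤ c)).filter (fun a => a ≤ c + t - n - 1)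
        = S.filter (· ≤ c + t - n - 1) := by
      rw [Finset.filter_filter]
      apply Finset.filter_congr
      intro a _
      constructor
      · intro hh; exact hh.2
      · intro hh; exact ⟨by omega, hh⟩
    have h4 := Finset.card_filter_add_card_filter_not
      (s := S.filter (· ≤ c)) (p := (· ≤ c + t - n - 1))
    rw [h2, h3] at h4
    have h5 : c + t - n - 1 = c + t - 1 - n := by omega
    rw [h1, ← h5]
    show _ + (cnt S (c + t - n - 1) + _) = cnt S c + _
    unfold cnt at *
    omega



lemma suf_wi {I J : Finset ℕ} (hc : I.card = J.card)
    (hsuf : ∀ t, (I.filter (fun a => t ≤ a)).card ≤ (J.filter (fun a => t ≤ a)).card) :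
    ∀ p ∈ canM I J, p.1 ≤ p.2 := by
  rintro ⟨i, j⟩ hp
  show i ≤ j
  rw [mem_canM hc] at hp
  obtain ⟨hi, hj, hr⟩ := hp
  by_contra hcon
  have h1 := hsuf (j + 1)
  have h2 := cnt_compl I j
  have h3 := cnt_compl J j
  have h5 : cnt I j < cnt I i := cnt_lt hi (by omega)
  omega

lemma pm_map {n : ℕ} {I J : Finset ℕ} {M : Finset (ℕ × ℕ)} (hpm : IsPM I J M)
    {g : ℕ → ℕ} (hg : Set.InjOn g ((Finset.Icc 1 n : Finset ℕ) : Set ℕ))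
    (hI : I ⊆ Finset.Icc 1 n) (hJ : J ⊆ Finset.Icc 1 n) :
    IsPM (I.image g) (J.image g) (M.image (fun p => (g p.1, g p.2))) := by
  refine ⟨?_, ?_, ?_⟩
  · rintro p hp
    obtain ⟨q, hq, rfl⟩ := Finset.mem_image.mp hp
    exact ⟨Finset.mem_image_of_mem g ((hpm.1 q hq).1),
      Finset.mem_image_of_mem g ((hpm.1 q hq).2)⟩
  · rintro i' hi'
    obtain ⟨i, hi, rfl⟩ := Finset.mem_image.mp hi'
    obtain ⟨j, hj, huniq⟩ := hpm.2.1 i hi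
    refine ⟨g j, Finset.mem_image.mpr ⟨(i, j), hj, rfl⟩, ?_⟩
    intro y hy
    obtain ⟨q, hq, hqe⟩ := Finset.mem_image.mp hy
    have hq1 : g q.1 = g i := congrArg Prod.fst hqe
    have hq2 : g q.2 = y := congrArg Prod.snd hqe
    have hqI : q.1 ∈ I := (hpm.1 q hq).1
    have e1 : q.1 = i := hg (Finset.mem_coe.mpr (hI hqI)) (Finset.mem_coe.mpr (hI hi)) hq1
    have e2 : q.2 = j := huniq q.2 (by rw [← e1]; exact (Prod.mk.eta (p := q)) ▸ hq)
    rw [← hq2, e2]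
  · rintro j' hj'
    obtain ⟨j, hj, rfl⟩ := Finset.mem_image.mp hj'
    obtain ⟨i, hi, huniq⟩ := hpm.2.2 j hj
    refine ⟨g i, Finset.mem_image.mpr ⟨(i, j), hi, rfl⟩, ?_⟩
    intro y hy
    obtain ⟨q, hq, hqe⟩ := Finset.mem_image.mp hy
    have hq1 : g q.1 = y := congrArg Prod.fst hqe
    have hq2 : g q.2 = g j := congrArg Prod.snd hqe
    have hqJ : q.2 ∈ J := (hpm.1 q hq).2
    have e1 : q.2 = j := hg (Finset.mem_coe.mpr (hJ hqJ)) (Finset.mem_coe.mpr (hJ hj)) hq2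
    have e2 : q.1 = i := huniq q.1 (by rw [← e1]; exact (Prod.mk.eta (p := q)) ▸ hq)
    rw [← hq1, e2]

lemma cntA {n c : ℕ} (hc1 : 1 ≤ c) (hc2 : c ≤ n) {S : Finset ℕ} (hS : S ⊆ Finset.Icc 1 n)
    {x : ℕ} (hx1 : 1 ≤ x) (hx2 : x ≤ c) :
    cnt (S.image (unshift n c)) (x + (n - c))
      = cnt S x + (S.filter (fun a => c + 1 ≤ a)).card := by
  show ((S.image (unshift n c)).filter (· ≤ x + (n - c))).card = _
  rw [filter_image_card (unshift_injOn hc2) hS]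
  have h1 : S.filter (fun a => unshift n c a ≤ x + (n - c))
      = S.filter (fun a => a ≤ x ∨ c + 1 ≤ a) := by
    apply Finset.filter_congr
    intro a ha
    have haI := hS ha
    simp only [Finset.mem_Icc] at haI
    unfold unshift
    constructor
    · intro hh
      by_cases hac : a ≤ c
      · rw [if_pos hac] at hh; left; omega
      · right; omega
    · intro hh
      rcases hh with hh | hh
      · rw [if_pos (by omega)]; omega
      · rw [if_neg (by omega)]; omega
  rw [h1, Finset.filter_or, Finset.card_union_of_disjoint]
  · rfl
  · rw [Finset.disjoint_left]
    intro a ha ha'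
    simp only [Finset.mem_filter] at ha ha'
    omega

lemma cntB {n c : ℕ} (hc1 : 1 ≤ c) (hc2 : c ≤ n) {S : Finset ℕ} (hS : S ⊆ Finset.Icc 1 n)
    {x : ℕ} (hx1 : c < x) (hx2 : x ≤ n) :
    cnt (S.image (unshift n c)) (x - c) + cnt S c = cnt S x := by
  have e0 : cnt (S.image (unshift n c)) (x - c)
      = (S.filter (fun a => a ≤ x ∧ ¬ a ≤ c)).card := by
    show ((S.image (unshift n c)).filter (· ≤ x - c)).card = _
    rw [filter_image_card (unshift_injOn hc2) hS]
    congr 1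
    apply Finset.filter_congr
    intro a ha
    have haI := hS ha
    simp only [Finset.mem_Icc] at haI
    unfold unshift
    constructor
    · intro hh
      by_cases hac : a ≤ c
      · rw [if_pos hac] at hh; omega
      · rw [if_neg hac] at hh; exact ⟨by omega, hac⟩
    · intro hh
      rw [if_neg hh.2]; omega
  have h2 : (S.filter (· ≤ x)).filter (fun a => ¬ a ≤ c)
      = S.filter (fun a => a ≤ x ∧ ¬ a ≤ c) := by
    rw [Finset.filter_filter]
  have h3 : (S.filter (· ≤ x)).filter (fun a => a ≤ c) = S.filter (· ≤ c) := by
    rw [Finset.filter_filter]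
    apply Finset.filter_congr
    intro a _
    constructor
    · intro hh; exact hh.2
    · intro hh; exact ⟨by omega, hh⟩
  have h4 := Finset.card_filter_add_card_filter_not
    (s := S.filter (· ≤ x)) (p := (· ≤ c))
  rw [h2, h3] at h4
  rw [e0]
  unfold cnt at *
  omega

lemma cntC {n c : ℕ} (hc1 : 1 ≤ c) (hc2 : c ≤ n) {S : Finset ℕ} (hS : S ⊆ Finset.Icc 1 n) :
    cnt (S.image (unshift n c)) (n - c) = (S.filter (fun a => c + 1 ≤ a)).card := by
  show ((S.image (unshift n c)).filter (· ≤ n - c)).card = _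
  rw [filter_image_card (unshift_injOn hc2) hS]
  congr 1
  apply Finset.filter_congr
  intro a ha
  have haI := hS ha
  simp only [Finset.mem_Icc] at haI
  unfold unshift
  constructor
  · intro hh
    by_contra hcon
    rw [if_pos (by omega)] at hh
    omega
  · intro hh
    rw [if_neg (by omega)]
    omega

lemma core' {n : ℕ} (hn : 0 < n) {I J : Finset ℕ} (hI : I ⊆ Finset.Icc 1 n)
    (hJ : J ⊆ Finset.Icc 1 n) (hc : I.card = J.card) {c : ℕ} (hc1 : 1 ≤ c) (hc2 : c ≤ n)
    (hwi0 : ∀ p ∈ canM I J, p.1 ≤ p.2)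
    (hwic : ∀ p ∈ canM (I.image (unshift n c)) (J.image (unshift n c)), p.1 ≤ p.2) :
    canM I J = (canM (I.image (unshift n c)) (J.image (unshift n c))).image
      (fun p => (cycShift n c p.1, cycShift n c p.2)) := by
  have hinj := unshift_injOn (n := n) hc2
  have hcI : (I.image (unshift n c)).card = I.card :=
    Finset.card_image_of_injOn (hinj.mono (Finset.coe_subset.mpr hI))
  have hcJ : (J.image (unshift n c)).card = J.card :=
    Finset.card_image_of_injOn (hinj.mono (Finset.coe_subset.mpr hJ))
  have hcc : (I.image (unshift n c)).card = (J.image (unshift n c)).card := by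
    rw [hcI, hcJ, hc]
  have hr1 : cnt J c ≤ cnt I c := wi_cnt (canM_isPM hc) hwi0 c
  have hr2 : cnt I c ≤ cnt J c := by
    have h := wi_cnt (canM_isPM hcc) hwic (n - c)
    rw [cntC hc1 hc2 hI, cntC hc1 hc2 hJ] at h
    have e1 := cnt_compl I c
    have e2 := cnt_compl J c
    omega
  apply Finset.eq_of_subset_of_card_le
  · rintro ⟨i, j⟩ hij
    obtain ⟨hi, hj, hrij⟩ := (mem_canM hc).mp hij
    have hij2 : i ≤ j := hwi0 (i, j) hij
    have hiI := hI hi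
    have hjJ := hJ hj
    simp only [Finset.mem_Icc] at hiI hjJ
    have hcross : j ≤ c ∨ (c < i ∧ c < j) := by
      by_cases hjc : j ≤ c
      · exact Or.inl hjc
      · right
        refine ⟨?_, by omega⟩
        by_contra hic
        have e1 : cnt I i ≤ cnt I c := cnt_mono I (by omega)
        have e2 : cnt J c < cnt J j := cnt_lt hj (by omega)
        omega
    have key : cnt (I.image (unshift n c)) (unshift n c i)
        = cnt (J.image (unshift n c)) (unshift n c j) := by
      rcases hcross with hjc | ⟨hci, hcj⟩
      · have hic : i ≤ c := le_trans hij2 hjc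
        have ei : unshift n c i = i + (n - c) := if_pos hic
        have ej : unshift n c j = j + (n - c) := if_pos hjc
        rw [ei, ej, cntA hc1 hc2 hI (by omega) hic, cntA hc1 hc2 hJ (by omega) hjc]
        have e1 := cnt_compl I c
        have e2 := cnt_compl J c
        omega
      · have ei : unshift n c i = i - c := if_neg (by omega)
        have ej : unshift n c j = j - c := if_neg (by omega)
        have b1 := cntB hc1 hc2 hI hci (by omega)
        have b2 := cntB hc1 hc2 hJ hcj (by omega)
        rw [ei, ej]
        omega
    refine Finset.mem_image.mpr ⟨(unshift n c i, unshift n c j), ?_, ?_⟩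
    · exact (mem_canM hcc).mpr
        ⟨Finset.mem_image_of_mem _ hi, Finset.mem_image_of_mem _ hj, key⟩
    · show (cycShift n c (unshift n c i), cycShift n c (unshift n c j)) = (i, j)
      rw [cycShift_unshift hc2 (hI hi), cycShift_unshift hc2 (hJ hj)]
  · have hIc : I.image (unshift n c) ⊆ Finset.Icc 1 n := by
      intro a ha
      obtain ⟨b, hb, rfl⟩ := Finset.mem_image.mp ha
      exact unshift_mem hc1 hc2 (hI hb)
    have hJc : J.image (unshift n c) ⊆ Finset.Icc 1 n := by
      intro a ha
      obtain ⟨b, hb, rfl⟩ := Finset.mem_image.mp ha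
      exact unshift_mem hc1 hc2 (hJ hb)
    have hcinj : Set.InjOn (fun p : ℕ × ℕ => (cycShift n c p.1, cycShift n c p.2))
        ((canM (I.image (unshift n c)) (J.image (unshift n c)) : Finset (ℕ × ℕ)) : Set (ℕ × ℕ)) := by
      intro p hp q hq hpq
      simp only [Finset.mem_coe] at hp hq
      have hp1 := ((canM_isPM hcc).1 p hp)
      have hq1 := ((canM_isPM hcc).1 q hq)
      have hpq1 : cycShift n c p.1 = cycShift n c q.1 := congrArg Prod.fst hpq
      have hpq2 : cycShift n c p.2 = cycShift n c q.2 := congrArg Prod.snd hpq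
      have e1 := cycShift_injOn hn hc2 (Finset.mem_coe.mpr (hIc hp1.1))
        (Finset.mem_coe.mpr (hIc hq1.1)) hpq1
      have e2 := cycShift_injOn hn hc2 (Finset.mem_coe.mpr (hJc hp1.2))
        (Finset.mem_coe.mpr (hJc hq1.2)) hpq2
      exact Prod.ext e1 e2
    rw [Finset.card_image_of_injOn hcinj, pm_card_fst (canM_isPM hcc), hcI,
      pm_card_fst (canM_isPM hc)]



lemma unshift_unshift {n c c' : ℕ} (hn : 0 < n) (hc1 : 1 ≤ c) (hc2 : c ≤ n)
    (hc1' : 1 ≤ c') (hc2' : c' ≤ n) {a : ℕ} (ha : a ∈ Finset.Icc 1 n) :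
    unshift n ((c' + n - c - 1) % n + 1) (unshift n c a) = unshift n c' a := by
  set e := (c' + n - c - 1) % n with he
  have hel : e < n := Nat.mod_lt _ hn
  have hek : e + n * ((c' + n - c - 1) / n) = c' + n - c - 1 := Nat.mod_add_div _ _
  set k := (c' + n - c - 1) / n with hk
  have ha' : unshift n c a ∈ Finset.Icc 1 n := unshift_mem hc1 hc2 ha
  rw [unshift_eq_cycShift (c := c) hc2 ha,
    unshift_eq_cycShift (c := e + 1) (by omega)
      (by rw [← unshift_eq_cycShift hc2 ha]; exact ha'),
    unshift_eq_cycShift (c := c') hc2' ha]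
  have ha1 : 1 ≤ a := by simp only [Finset.mem_Icc] at ha; exact ha.1
  rw [cycShift_comp ha1]
  have harith : n - c + (n - (e + 1)) = (n - c') + n * k := by omega
  rw [harith, cycShift_add_mul]

lemma coreGen {n : ℕ} (hn : 0 < n) {I J : Finset ℕ} (hI : I ⊆ Finset.Icc 1 n)
    (hJ : J ⊆ Finset.Icc 1 n) (hc : I.card = J.card) {c c' : ℕ}
    (hc1 : 1 ≤ c) (hc2 : c ≤ n) (hc1' : 1 ≤ c') (hc2' : c' ≤ n)
    (hw : ∀ p ∈ canM (I.image (unshift n c)) (J.image (unshift n c)), p.1 ≤ p.2)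
    (hw' : ∀ p ∈ canM (I.image (unshift n c')) (J.image (unshift n c')), p.1 ≤ p.2) :
    (canM (I.image (unshift n c)) (J.image (unshift n c))).image
      (fun p => (cycShift n c p.1, cycShift n c p.2))
    = (canM (I.image (unshift n c')) (J.image (unshift n c'))).image
      (fun p => (cycShift n c' p.1, cycShift n c' p.2)) := by
  set c'' := (c' + n - c - 1) % n + 1 with hc''
  have hc''1 : 1 ≤ c'' := by omega
  have hc''2 : c'' ≤ n := by
    have := Nat.mod_lt (c' + n - c - 1) hn
    omega
  have hIc : I.image (unshift n c) ⊆ Finset.Icc 1 n := by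
    intro a ha
    obtain ⟨b, hb, rfl⟩ := Finset.mem_image.mp ha
    exact unshift_mem hc1 hc2 (hI hb)
  have hJc : J.image (unshift n c) ⊆ Finset.Icc 1 n := by
    intro a ha
    obtain ⟨b, hb, rfl⟩ := Finset.mem_image.mp ha
    exact unshift_mem hc1 hc2 (hJ hb)
  have hinj := unshift_injOn (n := n) hc2
  have hcI : (I.image (unshift n c)).card = I.card :=
    Finset.card_image_of_injOn (hinj.mono (Finset.coe_subset.mpr hI))
  have hcJ : (J.image (unshift n c)).card = J.card :=
    Finset.card_image_of_injOn (hinj.mono (Finset.coe_subset.mpr hJ))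
  have hcc : (I.image (unshift n c)).card = (J.image (unshift n c)).card := by
    rw [hcI, hcJ, hc]
  have himgI : (I.image (unshift n c)).image (unshift n c'') = I.image (unshift n c') := by
    rw [Finset.image_image]
    apply Finset.image_congr
    intro a ha
    exact unshift_unshift hn hc1 hc2 hc1' hc2' (hI ha)
  have himgJ : (J.image (unshift n c)).image (unshift n c'') = J.image (unshift n c') := by
    rw [Finset.image_image]
    apply Finset.image_congr
    intro a ha
    exact unshift_unshift hn hc1 hc2 hc1' hc2' (hJ ha)
  have hcore := core' hn hIc hJc hcc hc''1 hc''2 hw (by rw [himgI, himgJ]; exact hw')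
  rw [hcore, himgI, himgJ, Finset.image_image]
  apply Finset.image_congr
  rintro ⟨i, j⟩ hp
  simp only [Finset.mem_coe] at hp
  have hcc' : (I.image (unshift n c')).card = (J.image (unshift n c')).card := by
    rw [Finset.card_image_of_injOn ((unshift_injOn hc2').mono (Finset.coe_subset.mpr hI)),
      Finset.card_image_of_injOn ((unshift_injOn hc2').mono (Finset.coe_subset.mpr hJ)), hc]
  obtain ⟨hi, hj, _⟩ := (mem_canM hcc').mp hp
  obtain ⟨a, haI, rfl⟩ := Finset.mem_image.mp hi
  obtain ⟨b, hbJ, rfl⟩ := Finset.mem_image.mp hj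
  have hia : unshift n c' a ∈ Finset.Icc 1 n := unshift_mem hc1' hc2' (hI haI)
  have hjb : unshift n c' b ∈ Finset.Icc 1 n := unshift_mem hc1' hc2' (hJ hbJ)
  simp only [Finset.mem_Icc] at hia hjb
  show (cycShift n c (cycShift n c'' _), cycShift n c (cycShift n c'' _)) = _
  rw [cycShift_comp hia.1, cycShift_comp hjb.1]
  set e := (c' + n - c - 1) % n with he
  have hel : e < n := Nat.mod_lt _ hn
  have hek : e + n * ((c' + n - c - 1) / n) = c' + n - c - 1 := Nat.mod_add_div _ _
  set k := (c' + n - c - 1) / n with hk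
  have harith : c'' + c + n * k = c' + n * 1 := by
    rw [hc'']
    omega
  have e1 : ∀ x, 1 ≤ x → cycShift n (c'' + c) x = cycShift n c' x := by
    intro x hx
    have s1 : cycShift n (c'' + c + n * k) x = cycShift n (c'' + c) x := cycShift_add_mul
    have s2 : cycShift n (c' + n * 1) x = cycShift n c' x := cycShift_add_mul
    rw [← s1, harith, s2]
  rw [e1 _ hia.1, e1 _ hjb.1]



lemma exists_good_cut {n : ℕ} (hn : 0 < n) {I J : Finset ℕ} (hI : I ⊆ Finset.Icc 1 n)
    (hJ : J ⊆ Finset.Icc 1 n) (hc : I.card = J.card) :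
    ∃ c, 1 ≤ c ∧ c ≤ n ∧ ∀ t,
      ((I.image (unshift n c)).filter (fun a => t ≤ a)).card
        ≤ ((J.image (unshift n c)).filter (fun a => t ≤ a)).card := by
  obtain ⟨c, hcmem, hmax⟩ := Finset.exists_max_image (Finset.Icc 1 n)
    (fun y => cnt J y + (I.card - cnt I y)) ⟨n, Finset.mem_Icc.mpr ⟨hn, le_rfl⟩⟩
  simp only [Finset.mem_Icc] at hcmem
  have hmax' : ∀ y, y ≤ n →
      cnt J y + (I.card - cnt I y) ≤ cnt J c + (I.card - cnt I c) := by
    intro y hy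
    rcases Nat.eq_zero_or_pos y with rfl | hy1
    · have h0 : cnt J 0 + (I.card - cnt I 0) = cnt J n + (I.card - cnt I n) := by
        rw [cnt_zero hI, cnt_zero hJ, cnt_eq_card hI le_rfl, cnt_eq_card hJ le_rfl, hc]
        omega
      rw [h0]
      exact hmax n (Finset.mem_Icc.mpr ⟨hn, le_rfl⟩)
    · exact hmax y (Finset.mem_Icc.mpr ⟨hy1, hy⟩)
  refine ⟨c, hcmem.1, hcmem.2, ?_⟩
  have hIinj := unshift_injOn (n := n) hcmem.2
  have hcI : (I.image (unshift n c)).card = I.card :=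
    Finset.card_image_of_injOn (hIinj.mono (Finset.coe_subset.mpr hI))
  have hcJ : (J.image (unshift n c)).card = J.card :=
    Finset.card_image_of_injOn (hIinj.mono (Finset.coe_subset.mpr hJ))
  have hIc : I.image (unshift n c) ⊆ Finset.Icc 1 n := by
    intro a ha
    obtain ⟨b, hb, rfl⟩ := Finset.mem_image.mp ha
    exact unshift_mem hcmem.1 hcmem.2 (hI hb)
  have hJc : J.image (unshift n c) ⊆ Finset.Icc 1 n := by
    intro a ha
    obtain ⟨b, hb, rfl⟩ := Finset.mem_image.mp ha
    exact unshift_mem hcmem.1 hcmem.2 (hJ hb)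
  intro t
  rcases Nat.eq_zero_or_pos t with rfl | ht1
  · have e1 : (I.image (unshift n c)).filter (fun a => 0 ≤ a) = I.image (unshift n c) :=
      Finset.filter_true_of_mem (fun a _ => Nat.zero_le a)
    have e2 : (J.image (unshift n c)).filter (fun a => 0 ≤ a) = J.image (unshift n c) :=
      Finset.filter_true_of_mem (fun a _ => Nat.zero_le a)
    rw [e1, e2, hcI, hcJ, hc]
  rcases Nat.lt_or_ge n t with h2 | h2
  · have e1 : (I.image (unshift n c)).filter (fun a => t ≤ a) = ∅ := by
      apply Finset.filter_eq_empty_iff.mpr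
      intro a ha
      have := hIc ha
      simp only [Finset.mem_Icc] at this
      omega
    rw [e1]
    simp
  · rw [filter_image_card hIinj hI, filter_image_card hIinj hJ]
    have kI := count_unshift hI hcmem.1 hcmem.2 ht1 h2
    have kJ := count_unshift hJ hcmem.1 hcmem.2 ht1 h2
    have hbI : ∀ y, cnt I y ≤ I.card := fun y => Finset.card_filter_le _ _
    have hbJ : ∀ y, cnt J y ≤ J.card := fun y => Finset.card_filter_le _ _
    by_cases hcase : t ≤ n - c
    · rw [if_pos hcase] at kI kJ
      have hb := hmax' (c + t - 1) (by omega)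
      have := hbI (c + t - 1)
      have := hbJ (c + t - 1)
      have := hbI c
      have := hbJ c
      omega
    · rw [if_neg hcase] at kI kJ
      have hb := hmax' (c + t - 1 - n) (by omega)
      have := hbI (c + t - 1 - n)
      have := hbJ (c + t - 1 - n)
      have := hbI c
      have := hbJ c
      omega

lemma family_form {n : ℕ} (hn : 0 < n) {I J : Finset ℕ} {M : Finset (ℕ × ℕ)}
    (hpm : IsPM I J M) (hfam : MemDyckFamily n M) :
    ∃ c, 1 ≤ c ∧ c ≤ n ∧
      (∀ p ∈ canM (I.image (unshift n c)) (J.image (unshift n c)), p.1 ≤ p.2) ∧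
      M = (canM (I.image (unshift n c)) (J.image (unshift n c))).image
        (fun p => (cycShift n c p.1, cycShift n c p.2)) := by
  obtain ⟨ℓ, hℓ, M₀, hcoords, hpm₀, hncwi, heq⟩ := hfam
  set c := if ℓ = 0 then n else ℓ with hcdef
  have hc1 : 1 ≤ c := by rw [hcdef]; split <;> omega
  have hc2 : c ≤ n := by rw [hcdef]; split <;> omega
  have hfun : (fun p : ℕ × ℕ => (cycShift n ℓ p.1, cycShift n ℓ p.2))
      = (fun p : ℕ × ℕ => (cycShift n c p.1, cycShift n c p.2)) := by
    have hf : cycShift n ℓ = cycShift n c := by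
      funext a
      rw [hcdef]
      split
      · next h =>
        subst h
        show (a - 1 + 0) % n + 1 = (a - 1 + n) % n + 1
        rw [Nat.add_mod_right]
        simp
      · rfl
    rw [hf]
  rw [hfun] at heq
  have hI₀ : M₀.image Prod.fst ⊆ Finset.Icc 1 n := by
    intro a ha
    obtain ⟨p, hp, rfl⟩ := Finset.mem_image.mp ha
    exact (hcoords p hp).1
  have hJ₀ : M₀.image Prod.snd ⊆ Finset.Icc 1 n := by
    intro a ha
    obtain ⟨p, hp, rfl⟩ := Finset.mem_image.mp ha
    exact (hcoords p hp).2
  have hMcan : M₀ = canM (M₀.image Prod.fst) (M₀.image Prod.snd) :=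
    ncwi_eq_canM hpm₀ hncwi.1
  have hIeq : I = (M₀.image Prod.fst).image (cycShift n c) := by
    rw [← pm_image_fst hpm, heq, Finset.image_image, Finset.image_image]
    rfl
  have hJeq : J = (M₀.image Prod.snd).image (cycShift n c) := by
    rw [← pm_image_snd hpm, heq, Finset.image_image, Finset.image_image]
    rfl
  have hIimg : I.image (unshift n c) = M₀.image Prod.fst := by
    rw [hIeq, Finset.image_image]
    have he : ∀ a ∈ M₀.image Prod.fst, (unshift n c ∘ cycShift n c) a = id a := by
      intro a ha
      exact unshift_cycShift hn hc2 (hI₀ ha)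
    rw [Finset.image_congr he, Finset.image_id]
  have hJimg : J.image (unshift n c) = M₀.image Prod.snd := by
    rw [hJeq, Finset.image_image]
    have he : ∀ a ∈ M₀.image Prod.snd, (unshift n c ∘ cycShift n c) a = id a := by
      intro a ha
      exact unshift_cycShift hn hc2 (hJ₀ ha)
    rw [Finset.image_congr he, Finset.image_id]
  refine ⟨c, hc1, hc2, ?_, ?_⟩
  · rw [hIimg, hJimg]
    intro p hp
    exact hncwi.2 p (by rwa [hMcan])
  · rw [hIimg, hJimg, ← hMcan]
    exact heq

theorem main (n : ℕ) (hn : 0 < n) (I J : Finset ℕ)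
    (hI : I ⊆ Finset.Icc 1 n) (hJ : J ⊆ Finset.Icc 1 n) (hcard : I.card = J.card) :
    ∃! M : Finset (ℕ × ℕ), IsPM I J M ∧ MemDyckFamily n M := by
  obtain ⟨c, hc1, hc2, hsuf⟩ := exists_good_cut hn hI hJ hcard
  have hinj := unshift_injOn (n := n) hc2
  have hcI : (I.image (unshift n c)).card = I.card :=
    Finset.card_image_of_injOn (hinj.mono (Finset.coe_subset.mpr hI))
  have hcJ : (J.image (unshift n c)).card = J.card :=
    Finset.card_image_of_injOn (hinj.mono (Finset.coe_subset.mpr hJ))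
  have hcc : (I.image (unshift n c)).card = (J.image (unshift n c)).card := by
    rw [hcI, hcJ, hcard]
  have hIc : I.image (unshift n c) ⊆ Finset.Icc 1 n := by
    intro a ha
    obtain ⟨b, hb, rfl⟩ := Finset.mem_image.mp ha
    exact unshift_mem hc1 hc2 (hI hb)
  have hJc : J.image (unshift n c) ⊆ Finset.Icc 1 n := by
    intro a ha
    obtain ⟨b, hb, rfl⟩ := Finset.mem_image.mp ha
    exact unshift_mem hc1 hc2 (hJ hb)
  have hwi : ∀ p ∈ canM (I.image (unshift n c)) (J.image (unshift n c)), p.1 ≤ p.2 :=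
    suf_wi hcc hsuf
  set M := (canM (I.image (unshift n c)) (J.image (unshift n c))).image
    (fun p => (cycShift n c p.1, cycShift n c p.2)) with hM
  have hpmM : IsPM I J M := by
    have h := pm_map (canM_isPM hcc) (cycShift_injOn hn hc2) hIc hJc
    have eI : (I.image (unshift n c)).image (cycShift n c) = I := by
      rw [Finset.image_image]
      have he : ∀ a ∈ I, (cycShift n c ∘ unshift n c) a = id a := by
        intro a ha
        exact cycShift_unshift hc2 (hI ha)
      rw [Finset.image_congr he, Finset.image_id]
    have eJ : (J.image (unshift n c)).image (cycShift n c) = J := by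
      rw [Finset.image_image]
      have he : ∀ a ∈ J, (cycShift n c ∘ unshift n c) a = id a := by
        intro a ha
        exact cycShift_unshift hc2 (hJ ha)
      rw [Finset.image_congr he, Finset.image_id]
    rwa [eI, eJ] at h
  have hfam : MemDyckFamily n M := by
    refine ⟨c % n, Nat.mod_lt _ hn, canM (I.image (unshift n c)) (J.image (unshift n c)),
      ?_, ?_, ?_, ?_⟩
    · intro p hp
      exact ⟨hIc ((canM_isPM hcc).1 p hp).1, hJc ((canM_isPM hcc).1 p hp).2⟩
    · rw [pm_image_fst (canM_isPM hcc), pm_image_snd (canM_isPM hcc)]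
      exact canM_isPM hcc
    · exact ⟨canM_mono hcc, hwi⟩
    · have hf : (fun p : ℕ × ℕ => (cycShift n (c % n) p.1, cycShift n (c % n) p.2))
          = (fun p : ℕ × ℕ => (cycShift n c p.1, cycShift n c p.2)) := by
        funext p
        rw [cycShift_mod, cycShift_mod]
      rw [hf]
  refine ⟨M, ⟨hpmM, hfam⟩, ?_⟩
  rintro M' ⟨hpm', hfam'⟩
  obtain ⟨c', hc1', hc2', hwi', heq'⟩ := family_form hn hpm' hfam'
  rw [heq', hM]
  exact coreGen hn hI hJ hcard hc1' hc2' hc1 hc2 hwi' hwi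


end Dyck

/-- (Supports axiom for `ℳ_n`.) For all `I, J ⊆ [n]` with `|I| = |J|` there is exactly
one perfect matching between `I` and `J` belonging to `ℳ_n`. -/
theorem dyckpaths_stmt4 (n : ℕ) (hn : 0 < n) (I J : Finset ℕ)
    (hI : I ⊆ Finset.Icc 1 n) (hJ : J ⊆ Finset.Icc 1 n) (hcard : I.card = J.card) :
    ∃! M : Finset (ℕ × ℕ), IsPM I J M ∧ MemDyckFamily n M :=
  Dyck.main n hn I J hI hJ hcard
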